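/- Every sequential topological space in which each sequence has at most one limit satisfies: if it is weakly reversible then it is reversible. Equivalently, a sequential space with unique sequential limits that is not reversible is not weakly reversible. -/

import Mathlib

open Filter Topology

universe u

section Aux

private lemma exists_strictMono_rec (Q : ℕ → ℕ → Prop) (hQ : ∀ m, ∃ n, m < n ∧ Q m n) :
    ∃ φ : ℕ → ℕ, StrictMono φ ∧ ∀ k, Q (φ k) (φ (k + 1)) := by
  choose nxt h1 h2 using hQ
  refine ⟨fun k => Nat.rec (motive := fun _ => ℕ) 0 (fun _ prev => nxt prev) k,
    strictMono_nat_of_lt_succ fun n => h1 _, fun k => h2 _⟩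

private lemma exists_gt_prop {P : ℕ → Prop} (h : {n | ¬ P n}.Finite) (m : ℕ) :
    ∃ n, m < n ∧ P n := by
  obtain ⟨n, hn⟩ := (h.union (Set.finite_Iic m)).infinite_compl.nonempty
  rw [Set.mem_compl_iff, Set.mem_union] at hn
  push_neg at hn
  exact ⟨n, not_le.mp (fun hle => hn.2 hle), not_not.mp hn.1⟩

private lemma inj_subseq {X : Type u} (s : ℕ → X) (hfin : ∀ a : X, {n | s n = a}.Finite) :
    ∃ φ : ℕ → ℕ, StrictMono φ ∧ Function.Injective (fun k => s (φ k)) := by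
  have hQ : ∀ m, ∃ n, m < n ∧ s n ∉ s '' Set.Iic m := by
    intro m
    apply exists_gt_prop ?_ m
    have heq : {n | ¬ s n ∉ s '' Set.Iic m} = ⋃ j ∈ Set.Iic m, {n | s n = s j} := by
      ext n
      simp only [Set.mem_setOf_eq, not_not, Set.mem_image, Set.mem_Iic, Set.mem_iUnion]
      constructor
      · rintro ⟨j, hj, hjn⟩; exact ⟨j, hj, hjn.symm⟩
      · rintro ⟨j, hj, hjn⟩; exact ⟨j, hj, hjn.symm⟩
    rw [heq]
    exact (Set.finite_Iic m).biUnion fun j _ => hfin (s j)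
  obtain ⟨φ, hφ, hstep⟩ := exists_strictMono_rec _ hQ
  refine ⟨φ, hφ, ?_⟩
  have hne : ∀ i j, i < j → s (φ i) ≠ s (φ j) := by
    intro i j hij heq
    have hj : j - 1 + 1 = j := by omega
    have h1 : φ i ≤ φ (j - 1) := hφ.monotone (Nat.le_pred_of_lt hij)
    apply hstep (j - 1)
    rw [hj]
    exact ⟨φ i, h1, heq⟩
  intro a b hab
  rcases lt_trichotomy a b with hlt | hlt | hlt
  · exact absurd hab (hne a b hlt)
  · exact hlt
  · exact absurd hab.symm (hne b a hlt)

private lemma strictMono_index {g : ℕ → ℕ} (hg : Function.Injective g) :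
    ∃ φ : ℕ → ℕ, StrictMono φ ∧ StrictMono (fun k => g (φ k)) := by
  have hQ : ∀ m, ∃ n, m < n ∧ g m < g n := by
    intro m
    apply exists_gt_prop ?_ m
    have hsub : {n | ¬ g m < g n} ⊆ ⋃ j ∈ Set.Iic (g m), {n | g n = j} := by
      intro n hn
      simp only [Set.mem_setOf_eq, not_lt] at hn
      simp only [Set.mem_iUnion, Set.mem_Iic, Set.mem_setOf_eq]
      exact ⟨g n, hn, rfl⟩
    exact Set.Finite.subset ((Set.finite_Iic (g m)).biUnion fun j _ =>
      Set.Subsingleton.finite fun x hx y hy => hg (hx.trans hy.symm)) hsub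
  obtain ⟨φ, hφ, hstep⟩ := exists_strictMono_rec _ hQ
  exact ⟨φ, hφ, strictMono_nat_of_lt_succ fun k => hstep k⟩

private lemma freq_of_infinite {p : ℕ → Prop} (h : {n | p n}.Infinite) :
    ∃ᶠ n in atTop, p n := by
  rw [Filter.frequently_atTop]
  intro N
  obtain ⟨n, hn, hNn⟩ := h.exists_gt N
  exact ⟨n, hNn.le, hn⟩

private lemma noconv {X : Type u} [TopologicalSpace X] (c : ℕ → X)
    (hsub : ∀ φ : ℕ → ℕ, StrictMono φ → ∀ z : X, ¬ Tendsto (fun k => c (φ k)) atTop (𝓝 z))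
    (w : ℕ → X) (z : X) (hwinj : Function.Injective w) (hwr : ∀ k, w k ∈ Set.range c) :
    ¬ Tendsto w atTop (𝓝 z) := by
  intro hw
  choose g hg using hwr
  have hginj : Function.Injective g := fun i j hij => hwinj (by rw [← hg i, ← hg j, hij])
  obtain ⟨φ, hφ, hgφ⟩ := strictMono_index hginj
  apply hsub (fun k => g (φ k)) hgφ z
  have heq : (fun k => c (g (φ k))) = fun k => w (φ k) := funext fun k => hg (φ k)
  rw [heq]
  exact hw.comp hφ.tendsto_atTop

private lemma closed_of_subset_range {X : Type u} [TopologicalSpace X] [SequentialSpace X]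
    (huniq : ∀ (u : ℕ → X) (y z : X), Tendsto u atTop (𝓝 y) → Tendsto u atTop (𝓝 z) → y = z)
    (c : ℕ → X)
    (hsub : ∀ φ : ℕ → ℕ, StrictMono φ → ∀ z : X, ¬ Tendsto (fun k => c (φ k)) atTop (𝓝 z))
    (T : Set X) (hT : T ⊆ Set.range c) : IsClosed T := by
  apply IsSeqClosed.isClosed
  intro s p hs hsp
  by_cases hA : ∃ a, {n | s n = a}.Infinite
  · obtain ⟨a, ha⟩ := hA
    obtain ⟨φ, hφ, hval⟩ := Filter.extraction_of_frequently_atTop (freq_of_infinite ha)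
    have h1 : Tendsto (fun k => s (φ k)) atTop (𝓝 p) := hsp.comp hφ.tendsto_atTop
    have h2 : Tendsto (fun k => s (φ k)) atTop (𝓝 a) := by
      have heq : (fun k => s (φ k)) = fun _ => a := funext hval
      rw [heq]; exact tendsto_const_nhds
    have hpa : p = a := huniq _ p a h1 h2
    obtain ⟨n, hn⟩ := ha.nonempty
    have hn' : s n = a := hn
    rw [hpa, ← hn']
    exact hs n
  · push_neg at hA
    obtain ⟨φ, hφ, hinj⟩ := inj_subseq s fun a => hA a
    exact absurd (hsp.comp hφ.tendsto_atTop)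
      (noconv c hsub _ p hinj fun k => hT (hs (φ k)))

/-- The coarsening of a topology at the single point `y`, requiring neighbourhoods of `y`
to contain `𝒰`-many points of the sequence `v`. -/
private def badTop {X : Type u} [TopologicalSpace X] (v : ℕ → X) (y : X) (𝒰 : Ultrafilter ℕ) :
    TopologicalSpace X where
  IsOpen W := IsOpen W ∧ (y ∈ W → {n | v n ∈ W} ∈ 𝒰)
  isOpen_univ := ⟨isOpen_univ, fun _ => by
    have huniv : {n : ℕ | v n ∈ (Set.univ : Set X)} = Set.univ := by ext n; simp
    rw [huniv]; exact Filter.univ_mem⟩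
  isOpen_inter := fun s t hs ht => ⟨hs.1.inter ht.1, fun hy => by
    have hm := Filter.inter_mem (hs.2 hy.1) (ht.2 hy.2)
    exact hm⟩
  isOpen_sUnion := fun S hS => ⟨isOpen_sUnion fun s hs => (hS s hs).1, fun hy => by
    obtain ⟨s, hsS, hys⟩ := Set.mem_sUnion.mp hy
    exact Filter.mem_of_superset ((hS s hsS).2 hys)
      fun n hn => Set.mem_sUnion.mpr ⟨s, hsS, hn⟩⟩

private lemma badTop_isOpen {X : Type u} [TopologicalSpace X] {v : ℕ → X} {y : X}
    {𝒰 : Ultrafilter ℕ} {W : Set X} :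
    @IsOpen X (badTop v y 𝒰) W ↔ IsOpen W ∧ (y ∈ W → {n | v n ∈ W} ∈ 𝒰) := Iff.rfl

private lemma tendsto_nhds_iff' {X : Type u} [TopologicalSpace X] {u : ℕ → X} {a : X} :
    Tendsto u atTop (𝓝 a) ↔ ∀ O : Set X, a ∈ O → IsOpen O → ∃ N, ∀ n, N ≤ n → u n ∈ O :=
  tendsto_atTop_nhds

end Aux

/-- a sequential space with unique sequential limits which is
weakly reversible is reversible. -/
theorem stmt_14 {X : Type u} [TopologicalSpace X] [SequentialSpace X]
    (huniq : ∀ (u : ℕ → X) (y z : X),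
      Tendsto u atTop (𝓝 y) → Tendsto u atTop (𝓝 z) → y = z)
    (hwr : ∀ (Y : Type u) [TopologicalSpace Y] (f : X → Y) (g : Y → X),
      Function.Bijective f → Continuous f → Function.Bijective g → Continuous g →
      Nonempty (X ≃ₜ Y)) :
    ∀ f : X ≃ X, Continuous (⇑f) → Continuous (⇑f.symm) := by
  intro f hf
  haveI hT1 : T1Space X := by
    refine ⟨fun x => ?_⟩
    apply IsSeqClosed.isClosed
    intro s p hs hsp
    have hsx : s = fun _ => x := funext fun n => hs n
    have hx : Tendsto s atTop (𝓝 x) := by rw [hsx]; exact tendsto_const_nhds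
    exact Set.mem_singleton_iff.mpr (huniq s p x hsp hx)
  suffices KEY : ∀ (v : ℕ → X) (y : X),
      Tendsto (fun n => f (v n)) atTop (𝓝 (f y)) → Tendsto v atTop (𝓝 y) by
    apply SeqContinuous.continuous
    intro u a hu
    exact KEY (fun n => f.symm (u n)) (f.symm a) (by simpa using hu)
  intro v₀ y h₀
  by_contra hnc
  rw [tendsto_nhds_iff'] at hnc
  push_neg at hnc
  obtain ⟨U, hyU, hUo, hfreq⟩ := hnc
  obtain ⟨φ₁, hφ₁, hout₁⟩ := Filter.extraction_of_frequently_atTop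
    (Filter.frequently_atTop.mpr hfreq)
  have hv₁f : Tendsto (fun n => f (v₀ (φ₁ n))) atTop (𝓝 (f y)) := h₀.comp hφ₁.tendsto_atTop
  have hfin₁ : ∀ a : X, {n | v₀ (φ₁ n) = a}.Finite := by
    intro a
    by_contra hinf
    obtain ⟨φ, hφ, hval⟩ := Filter.extraction_of_frequently_atTop (freq_of_infinite hinf)
    have h1 : Tendsto (fun k => f (v₀ (φ₁ (φ k)))) atTop (𝓝 (f y)) :=
      hv₁f.comp hφ.tendsto_atTop
    have h2 : Tendsto (fun k => f (v₀ (φ₁ (φ k)))) atTop (𝓝 (f a)) := by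
      have heq : (fun k => f (v₀ (φ₁ (φ k)))) = fun _ => f a := funext fun k => by rw [hval k]
      rw [heq]; exact tendsto_const_nhds
    have hay : a = y := f.injective (huniq _ _ _ h2 h1)
    obtain ⟨n, hn⟩ := Set.Infinite.nonempty hinf
    have hn' : v₀ (φ₁ n) = a := hn
    exact hout₁ n (by rw [hn', hay]; exact hyU)
  obtain ⟨φ₂, hφ₂, hvinj⟩ := inj_subseq _ hfin₁
  set v : ℕ → X := fun k => v₀ (φ₁ (φ₂ k)) with hvdef
  have hvU : ∀ k, v k ∉ U := fun k => hout₁ (φ₂ k)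
  have hvf : Tendsto (fun k => f (v k)) atTop (𝓝 (f y)) := hv₁f.comp hφ₂.tendsto_atTop
  have hvsub : ∀ φ : ℕ → ℕ, StrictMono φ → ∀ z : X,
      ¬ Tendsto (fun k => v (φ k)) atTop (𝓝 z) := by
    intro φ hφ z hz
    have h1 : Tendsto (fun k => f (v (φ k))) atTop (𝓝 (f z)) := (hf.tendsto z).comp hz
    have h2 : Tendsto (fun k => f (v (φ k))) atTop (𝓝 (f y)) := hvf.comp hφ.tendsto_atTop
    have hzy : z = y := f.injective (huniq _ _ _ h1 h2)
    rw [hzy] at hz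
    obtain ⟨N, hN⟩ := tendsto_nhds_iff'.mp hz U hyU hUo
    exact hvU (φ N) (hN N le_rfl)
  have hyv : y ∉ Set.range v := by
    rintro ⟨n, hn⟩
    exact hvU n (by rw [hn]; exact hyU)
  have hvclosed : ∀ T : Set X, T ⊆ Set.range v → IsClosed T :=
    closed_of_subset_range huniq v hvsub
  set 𝒰 : Ultrafilter ℕ := Filter.hyperfilter ℕ with h𝒰
  have hcof : ∀ S : Set ℕ, Sᶜ.Finite → S ∈ 𝒰 := fun S hS =>
    Filter.hyperfilter_le_cofinite (Filter.mem_cofinite.mpr hS)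
  have hcid : @Continuous X X _ (badTop v y 𝒰) id := by
    rw [@continuous_def X X _ (badTop v y 𝒰)]
    intro s hs
    exact ((badTop_isOpen).mp hs).1
  have hcf : @Continuous X X (badTop v y 𝒰) _ ⇑f := by
    rw [@continuous_def X X (badTop v y 𝒰) _]
    intro s hs
    refine (badTop_isOpen).mpr ⟨hf.isOpen_preimage s hs, fun hy => ?_⟩
    obtain ⟨N, hN⟩ := tendsto_nhds_iff'.mp hvf s hy hs
    apply hcof
    refine Set.Finite.subset (Set.finite_Iio N) ?_
    intro n hn
    simp only [Set.mem_compl_iff, Set.mem_setOf_eq, Set.mem_preimage] at hn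
    by_contra hlt
    exact hn (hN n (not_lt.mp fun hc => hlt hc))
  obtain ⟨h⟩ := @hwr X (badTop v y 𝒰) id ⇑f Function.bijective_id hcid f.bijective hcf
  have hhc : @Continuous X X _ (badTop v y 𝒰) ⇑h :=
    @Homeomorph.continuous X X _ (badTop v y 𝒰) h
  have hhsc : @Continuous X X (badTop v y 𝒰) _ ⇑(@Homeomorph.symm X X _ (badTop v y 𝒰) h) :=
    @Homeomorph.continuous X X (badTop v y 𝒰) _ (@Homeomorph.symm X X _ (badTop v y 𝒰) h)
  have happ : ∀ x : X, h ((@Homeomorph.symm X X _ (badTop v y 𝒰) h) x) = x :=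
    fun x => (@Homeomorph.toEquiv X X _ (badTop v y 𝒰) h).apply_symm_apply x
  have hUSμ : ∀ (u : ℕ → X) (b c : X), Tendsto u atTop (@nhds X (badTop v y 𝒰) b) →
      Tendsto u atTop (@nhds X (badTop v y 𝒰) c) → b = c := by
    intro u b c hb hc
    have hb' := (@Continuous.tendsto X X (badTop v y 𝒰) _ ⇑(@Homeomorph.symm X X _ (badTop v y 𝒰) h) hhsc b).comp hb
    have hc' := (@Continuous.tendsto X X (badTop v y 𝒰) _ ⇑(@Homeomorph.symm X X _ (badTop v y 𝒰) h) hhsc c).comp hc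
    exact (@Homeomorph.toEquiv X X _ (badTop v y 𝒰) h).symm.injective (huniq _ _ _ hb' hc')
  have hτμ : ∀ (u : ℕ → X) (z : X), Tendsto u atTop (𝓝 z) →
      Tendsto u atTop (@nhds X (badTop v y 𝒰) z) := by
    intro u z hz
    refine (@tendsto_nhds_iff' X (badTop v y 𝒰) u z).mpr ?_
    intro O hzO hO
    exact tendsto_nhds_iff'.mp hz O hzO ((badTop_isOpen).mp hO).1
  have hmonster : ∀ (s : ℕ → X) (p : X), (∀ n, s n ∉ U) →
      Tendsto s atTop (@nhds X (badTop v y 𝒰) p) → p ∉ U := by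
    intro s p hs hsp hpU
    by_cases hpy : p = y
    · rw [hpy] at hsp
      clear hpU hpy
      have hssub : ∀ φ : ℕ → ℕ, StrictMono φ → ∀ z : X,
          ¬ Tendsto (fun k => s (φ k)) atTop (𝓝 z) := by
        intro φ hφ z hz
        have h1 : Tendsto (fun k => s (φ k)) atTop (@nhds X (badTop v y 𝒰) z) := hτμ _ z hz
        have h2 : Tendsto (fun k => s (φ k)) atTop (@nhds X (badTop v y 𝒰) y) :=
          hsp.comp hφ.tendsto_atTop
        have hzy : z = y := hUSμ _ z y h1 h2
        rw [hzy] at hz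
        obtain ⟨N, hN⟩ := tendsto_nhds_iff'.mp hz U hyU hUo
        exact hs (φ N) (hN N le_rfl)
      have hfele : ∀ a : X, {n | s n = a}.Finite := by
        intro a
        by_contra hinf
        obtain ⟨φ, hφ, hval⟩ := Filter.extraction_of_frequently_atTop (freq_of_infinite hinf)
        apply hssub φ hφ a
        have heq : (fun k => s (φ k)) = fun _ => a := funext hval
        rw [heq]; exact tendsto_const_nhds
      obtain ⟨φ₂', hφ₂', hinj'⟩ := inj_subseq s hfele
      set t0 : ℕ → X := fun k => s (φ₂' k) with ht0
      have ht0U : ∀ k, t0 k ∉ U := fun k => hs (φ₂' k)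
      have ht0μ : Tendsto t0 atTop (@nhds X (badTop v y 𝒰) y) := hsp.comp hφ₂'.tendsto_atTop
      have ht0sub : ∀ φ : ℕ → ℕ, StrictMono φ → ∀ z : X,
          ¬ Tendsto (fun k => t0 (φ k)) atTop (𝓝 z) :=
        fun φ hφ z => hssub (fun k => φ₂' (φ k)) (hφ₂'.comp hφ) z
      have hyt0 : y ∉ Set.range t0 := by
        rintro ⟨k, hk⟩
        exact ht0U k (by rw [hk]; exact hyU)
      by_cases hQ : {k | t0 k ∈ Set.range v}.Finite
      · have hScl : IsClosed (Set.range t0) :=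
          closed_of_subset_range huniq t0 ht0sub _ subset_rfl
        have htrace : {n | v n ∈ Set.range t0}.Finite := by
          have hsubset : {n | v n ∈ Set.range t0} ⊆
              (fun k => Function.invFun v (t0 k)) '' {k | t0 k ∈ Set.range v} := by
            intro n hn
            obtain ⟨k, hk⟩ := hn
            refine ⟨k, ⟨n, hk.symm⟩, ?_⟩
            show Function.invFun v (t0 k) = n
            rw [hk]
            exact Function.leftInverse_invFun hvinj n
          exact Set.Finite.subset (hQ.image _) hsubset
        have hOμ : @IsOpen X (badTop v y 𝒰) (Set.range t0)ᶜ := by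
          refine (badTop_isOpen).mpr ⟨hScl.isOpen_compl, fun _ => ?_⟩
          apply hcof
          have heq : {n | v n ∈ (Set.range t0)ᶜ}ᶜ = {n | v n ∈ Set.range t0} := by
            ext n; simp
          rw [heq]; exact htrace
        obtain ⟨N, hN⟩ := (@tendsto_nhds_iff' X (badTop v y 𝒰) t0 y).mp ht0μ _ hyt0 hOμ
        exact (hN N le_rfl) ⟨N, rfl⟩
      · have hQ' : {k | t0 k ∈ Set.range v}.Infinite := hQ
        obtain ⟨φ₄, hφ₄, hmem⟩ := Filter.extraction_of_frequently_atTop (freq_of_infinite hQ')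
        choose g hg using hmem
        have hginj : Function.Injective g := by
          intro i j hij
          have heq : t0 (φ₄ i) = t0 (φ₄ j) := by rw [← hg i, ← hg j, hij]
          exact hφ₄.injective (hinj' heq)
        obtain ⟨φ₅, hφ₅, hψmono⟩ := strictMono_index hginj
        set ψ : ℕ → ℕ := fun j => g (φ₅ j) with hψdef
        have htμ : Tendsto (fun j => v (ψ j)) atTop (@nhds X (badTop v y 𝒰) y) := by
          have heq : (fun j => v (ψ j)) = fun j => t0 (φ₄ (φ₅ j)) := funext fun j => hg (φ₅ j)
          rw [heq]
          exact ht0μ.comp ((hφ₄.comp hφ₅).tendsto_atTop)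
        have hkey : ∀ P : Set ℕ, (∀ N, ∃ j, N ≤ j ∧ ψ j ∈ P) → Pᶜ ∉ 𝒰 := by
          intro P hfreqP hmem'
          have hOμ : @IsOpen X (badTop v y 𝒰) (v '' P)ᶜ := by
            refine (badTop_isOpen).mpr
              ⟨(hvclosed _ (Set.image_subset_range v P)).isOpen_compl, fun _ => ?_⟩
            have heq : {n | v n ∈ (v '' P)ᶜ} = Pᶜ := by
              ext n
              simp only [Set.mem_setOf_eq, Set.mem_compl_iff, Set.mem_image]
              constructor
              · intro hn hnP; exact hn ⟨n, hnP, rfl⟩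
              · rintro hn ⟨m, hmP, hmn⟩
                exact hn (hvinj hmn ▸ hmP)
            rw [heq]; exact hmem'
          have hyO : y ∈ (v '' P)ᶜ := fun hc => hyv (Set.image_subset_range v P hc)
          obtain ⟨N, hN⟩ := (@tendsto_nhds_iff' X (badTop v y 𝒰) _ y).mp htμ _ hyO hOμ
          obtain ⟨j, hNj, hjP⟩ := hfreqP N
          exact (hN j hNj) ⟨ψ j, hjP, rfl⟩
        have hP : Set.range ψ ∈ 𝒰 := by
          by_contra hno
          exact hkey (Set.range ψ) (fun N => ⟨N, le_rfl, ⟨N, rfl⟩⟩)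
            (Ultrafilter.compl_mem_iff_notMem.mpr hno)
        have hψinj : Function.Injective ψ := hψmono.injective
        set P₀ : Set ℕ := ψ '' {j | Even j} with hP₀
        set P₁ : Set ℕ := ψ '' {j | ¬ Even j} with hP₁
        have hPsub : Set.range ψ ⊆ P₀ ∪ P₁ := by
          rintro _ ⟨j, rfl⟩
          by_cases hj : Even j
          · exact Or.inl ⟨j, hj, rfl⟩
          · exact Or.inr ⟨j, hj, rfl⟩
        have hor : P₀ ∈ 𝒰 ∨ P₁ ∈ 𝒰 :=
          Ultrafilter.union_mem_iff.mp (Filter.mem_of_superset hP hPsub)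
        have hdisj : ∀ x, x ∈ P₀ → x ∈ P₁ → False := by
          rintro x ⟨i, hi, rfl⟩ ⟨j, hj, hji⟩
          exact hj (by rw [hψinj hji]; exact hi)
        rcases hor with hcase | hcase
        · refine hkey P₁ ?_ ?_
          · intro N
            refine ⟨2 * N + 1, by omega, ⟨2 * N + 1, ?_, rfl⟩⟩
            simp [Nat.even_add_one, parity_simps]
          · exact Filter.mem_of_superset hcase fun x hx hxP₁ => hdisj x hx hxP₁
        · refine hkey P₀ ?_ ?_
          · intro N
            exact ⟨2 * N, by omega, ⟨2 * N, even_two_mul N, rfl⟩⟩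
          · exact Filter.mem_of_superset hcase fun x hx hxP₀ => hdisj x hxP₀ hx
    · have hOμ : @IsOpen X (badTop v y 𝒰) (U \ {y}) := by
        refine (badTop_isOpen).mpr ⟨hUo.sdiff isClosed_singleton, fun hy => ?_⟩
        exact (hy.2 rfl).elim
      obtain ⟨N, hN⟩ := (@tendsto_nhds_iff' X (badTop v y 𝒰) s p).mp hsp (U \ {y})
        ⟨hpU, hpy⟩ hOμ
      exact hs N (hN N le_rfl).1
  have hclosedμ : @IsClosed X (badTop v y 𝒰) Uᶜ := by
    have hA : IsClosed (⇑h ⁻¹' Uᶜ) := by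
      apply IsSeqClosed.isClosed
      intro sq z hsq hz
      exact hmonster (fun n => h (sq n)) (h z) (fun n => hsq n)
        ((@Continuous.tendsto X X _ (badTop v y 𝒰) ⇑h hhc z).comp hz)
    have hU' : Uᶜ = ⇑(@Homeomorph.symm X X _ (badTop v y 𝒰) h) ⁻¹' (⇑h ⁻¹' Uᶜ) := by
      ext x
      show x ∉ U ↔ h ((@Homeomorph.symm X X _ (badTop v y 𝒰) h) x) ∉ U
      rw [happ x]
    rw [hU']
    exact @IsClosed.preimage X X (badTop v y 𝒰) _ ⇑(@Homeomorph.symm X X _ (badTop v y 𝒰) h) hhsc _ hA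
  have hUμ : @IsOpen X (badTop v y 𝒰) U := by
    rw [← @isClosed_compl_iff X (badTop v y 𝒰)]
    exact hclosedμ
  have hmem : {n | v n ∈ U} ∈ 𝒰 := ((badTop_isOpen).mp hUμ).2 hyU
  have hempty : ({n | v n ∈ U} : Set ℕ) = ∅ := by
    ext n
    simp [hvU n]
  rw [hempty] at hmem
  exact (Filter.empty_notMem (𝒰 : Filter ℕ)) hmem
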